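/- Let X_n ⊆ {0,1}^D be a set of n pairwise distinct binary vectors and let r = ⌈√n⌉. Then there exists a five-layer Boolean threshold network with layer sizes D, r + D, 2r, rD, D (i.e., a composition of four threshold layers {0,1}^D → {0,1}^{r+D} → {0,1}^{2r} → {0,1}^{rD} → {0,1}^D) whose composition maps x to x for every x ∈ X_n (a perfect autoencoder with middle layer of size 2r). -/

import Mathlib

/-- A Boolean threshold function: there are integer weights `a` and an integer
threshold `θ` such that `f x = 1` iff `∑ i, a i * x i ≥ θ` (bits as integers 0/1). -/
def IsThresholdFun {ι : Type*} [Fintype ι] (f : (ι → Bool) → Bool) : Prop :=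
  ∃ (a : ι → ℤ) (θ : ℤ), ∀ x, f x = decide (θ ≤ ∑ i, a i * (if x i then 1 else 0))

/-- A threshold layer: each coordinate function is a Boolean threshold function. -/
def IsThresholdLayer {ι κ : Type*} [Fintype ι] (F : (ι → Bool) → (κ → Bool)) : Prop :=
  ∀ j, IsThresholdFun (fun x => F x j)

/-- The step vector `h^i[s]`: coordinate `j` is 1 iff `j ≤ i`. -/
def stepVec (s i : ℕ) : Fin s → Bool := fun j => decide (j.val ≤ i)

/-- `i2b d j`: the `d`-bit binary representation of `j`. -/
def i2b (d j : ℕ) : Fin d → Bool := fun k => j.testBit k.val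

/-- Integer dot product of a weight vector with a bit vector. -/
def dotInt {ι : Type*} [Fintype ι] (a : ι → ℤ) (x : ι → Bool) : ℤ :=
  ∑ i, a i * (if x i then 1 else 0)

namespace S16
open Finset


/-! ### Generic sum lemmas -/

lemma tele (W : ℕ → ℤ) (q : ℕ) :
    ∑ u ∈ Finset.range (q+1), (W u - if u = 0 then 0 else W (u-1)) = W q := by
  induction q with
  | zero => simp
  | succ q ih =>
    rw [Finset.sum_range_succ, ih]
    simp only [Nat.succ_ne_zero, if_false, Nat.add_sub_cancel]
    ring

lemma trunc {q r : ℕ} (h : q < r) (d : ℕ → ℤ) :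
    ∑ u ∈ Finset.range r, (if u ≤ q then d u else 0) = ∑ u ∈ Finset.range (q+1), d u :=
  calc ∑ u ∈ Finset.range r, (if u ≤ q then d u else 0)
      = ∑ u ∈ Finset.range (q+1), (if u ≤ q then d u else 0) :=
        (Finset.sum_subset (Finset.range_subset_range.mpr h)
          (fun u _ hnu => if_neg (by simp only [Finset.mem_range] at hnu; omega))).symm
    _ = ∑ u ∈ Finset.range (q+1), d u :=
        Finset.sum_congr rfl (fun u hu => if_pos (by simp only [Finset.mem_range] at hu; omega))

lemma sum_split (p d : ℕ) (f : ℕ → ℤ) :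
    ∑ u ∈ Finset.range (p + d), f u
      = ∑ u ∈ Finset.range p, f u + ∑ u ∈ Finset.range d, f (p + u) := by
  induction d with
  | zero => simp
  | succ d ih =>
    rw [Nat.add_succ, Finset.sum_range_succ, ih, Finset.sum_range_succ]
    ring

lemma dot_single {N : ℕ} (c : ℕ) (hc : c < N) (y : Fin N → Bool) :
    (∑ u : Fin N, (if (u : ℕ) = c then (1:ℤ) else 0) * (if y u then 1 else 0))
      = (if y ⟨c, hc⟩ then 1 else 0) := by
  rw [Finset.sum_eq_single (⟨c, hc⟩ : Fin N)]
  · simp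
  · intro b _ hb
    have : (b : ℕ) ≠ c := fun h => hb (Fin.ext h)
    simp [this]
  · simp

/-! ### Binary values -/

def nv (D : ℕ) (f : ℕ → Bool) : ℕ := ∑ k ∈ Finset.range D, if f k then 2^k else 0

lemma nv_lt (D : ℕ) (f : ℕ → Bool) : nv D f < 2^D := by
  induction D with
  | zero => simp [nv]
  | succ D ih =>
    have h2 : 2^(D+1) = 2^D * 2 := pow_succ 2 D
    rw [nv, Finset.sum_range_succ, ← nv]
    split <;> omega

lemma nv_testBit : ∀ (D : ℕ) (f : ℕ → Bool) (j : ℕ),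
    (nv D f).testBit j = (decide (j < D) && f j) := by
  intro D
  induction D with
  | zero => intro f j; simp [nv]
  | succ D ih =>
    intro f j
    have hrw : nv (D+1) f = (if f 0 then 1 else 0) + 2 * nv D (fun k => f (k+1)) := by
      rw [nv, Finset.sum_range_succ']
      have h2 : ∀ k, (if f (k+1) then 2^(k+1) else 0) = 2 * (if f (k+1) then 2^k else 0) := by
        intro k
        split
        · rw [pow_succ]; ring
        · simp
      rw [Finset.sum_congr rfl (fun k _ => h2 k), ← Finset.mul_sum, ← nv, pow_zero, add_comm]
    cases j with
    | zero =>
      rw [hrw, Nat.testBit_zero]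
      cases hf : f 0
      · have hm : ((if false = true then 1 else 0) + 2 * nv D fun k => f (k+1)) % 2 = 0 := by
          simp
        simp [hf, hm]
      · have hm : ((if true = true then 1 else 0) + 2 * nv D fun k => f (k+1)) % 2 = 1 := by
          simp
        simp [hf, hm]
    | succ j =>
      rw [hrw, Nat.testBit_succ]
      have hdiv : ((if f 0 then 1 else 0) + 2 * nv D (fun k => f (k+1))) / 2
          = nv D (fun k => f (k+1)) := by
        split <;> omega
      rw [hdiv, ih]
      simp [Nat.succ_lt_succ_iff]

def vB (D : ℕ) (y : Fin D → Bool) : ℤ := ∑ k : Fin D, 2^(k:ℕ) * (if y k then 1 else 0)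

lemma vB_eq_nv (D : ℕ) (y : Fin D → Bool) :
    vB D y = (nv D (fun k => if h : k < D then y ⟨k, h⟩ else false) : ℤ) := by
  rw [vB, nv]
  push_cast
  rw [← Fin.sum_univ_eq_sum_range
    (fun k => if (if h : k < D then y ⟨k, h⟩ else false) then (2:ℤ)^k else 0) D]
  apply Finset.sum_congr rfl
  intro k _
  rw [dif_pos k.isLt]
  simp [mul_comm]

lemma vB_lt (D : ℕ) (y : Fin D → Bool) : vB D y < 2^D := by
  rw [vB_eq_nv]
  exact_mod_cast nv_lt D _

lemma vB_inj (D : ℕ) : Function.Injective (vB D) := by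
  intro y y' h
  rw [vB_eq_nv, vB_eq_nv] at h
  have h' := (Nat.cast_injective : Function.Injective (Nat.cast : ℕ → ℤ)) h
  funext k
  have := congrArg (fun m => Nat.testBit m k.val) h'
  simp only [nv_testBit, k.isLt, decide_true, Bool.true_and, dif_pos k.isLt] at this
  simpa using this

/-! ### Ranks -/

variable {n : ℕ}

def rkv (v : Fin n → ℤ) (i : Fin n) : ℕ := (Finset.univ.filter fun j => v j < v i).card

lemma rkv_lt (v : Fin n → ℤ) (i : Fin n) : rkv v i < n := by
  have h : (Finset.univ.filter fun j => v j < v i) ⊂ Finset.univ := by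
    rw [Finset.ssubset_univ_iff]
    intro hEq
    have : i ∈ Finset.univ.filter fun j => v j < v i := by
      rw [hEq]; exact Finset.mem_univ i
    simp at this
  simpa [rkv] using Finset.card_lt_card h

lemma rkv_lt_rkv {v : Fin n → ℤ} {i j : Fin n} (h : v i < v j) : rkv v i < rkv v j := by
  apply Finset.card_lt_card
  have hsub : (Finset.univ.filter fun k => v k < v i) ⊆ (Finset.univ.filter fun k => v k < v j) := by
    intro k hk
    simp only [Finset.mem_filter, Finset.mem_univ, true_and] at hk ⊢
    omega
  rw [Finset.ssubset_iff_of_subset hsub]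
  exact ⟨i, by simp [h], by simp⟩

lemma rkv_le_iff {v : Fin n → ℤ} (hv : Function.Injective v) {i j : Fin n} :
    rkv v i ≤ rkv v j ↔ v i ≤ v j := by
  constructor
  · intro h
    by_contra hc
    push_neg at hc
    have := rkv_lt_rkv hc
    omega
  · intro h
    rcases h.lt_or_eq with h' | h'
    · exact (rkv_lt_rkv h').le
    · exact le_of_eq (congrArg _ (hv h'))

lemma rkv_inj {v : Fin n → ℤ} (hv : Function.Injective v) : Function.Injective (rkv v) := by
  intro i j h
  rcases lt_trichotomy (v i) (v j) with hh | hh | hh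
  · have := rkv_lt_rkv hh; omega
  · exact hv hh
  · have := rkv_lt_rkv hh; omega

lemma rkv_surj {v : Fin n → ℤ} (hv : Function.Injective v) {m : ℕ} (hm : m < n) :
    ∃ i, rkv v i = m := by
  have hinj : Function.Injective (fun i : Fin n => (⟨rkv v i, rkv_lt v i⟩ : Fin n)) := by
    intro a b hab
    exact rkv_inj hv (by simpa [Fin.mk.injEq] using hab)
  obtain ⟨i, hi⟩ := Finite.surjective_of_injective hinj ⟨m, hm⟩
  exact ⟨i, by simpa [Fin.mk.injEq] using hi⟩

noncomputable def wv (v : Fin n → ℤ) (big : ℤ) (m : ℕ) : ℤ :=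
  if h : ∃ j, rkv v j = m then v h.choose else big

lemma wv_le_iff {v : Fin n → ℤ} (hv : Function.Injective v) {big : ℤ}
    (hbig : ∀ j, v j < big) (i : Fin n) (m : ℕ) :
    wv v big m ≤ v i ↔ m ≤ rkv v i := by
  unfold wv
  split_ifs with h
  · have hthis : v h.choose ≤ v i ↔ rkv v h.choose ≤ rkv v i := (rkv_le_iff hv).symm
    rw [h.choose_spec] at hthis
    exact hthis
  · constructor
    · intro hle
      exact absurd (lt_of_lt_of_le (hbig i) hle) (lt_irrefl _)
    · intro hle
      exact absurd (rkv_surj hv (lt_of_le_of_lt hle (rkv_lt v i))) h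

lemma decide_one_le_ite (b : Bool) : decide ((1:ℤ) ≤ if b then 1 else 0) = b := by
  cases b <;> simp


lemma vB_range (D : ℕ) (y : Fin D → Bool) :
    vB D y = ∑ u ∈ Finset.range D,
      (if h : u < D then (2:ℤ)^u * (if y ⟨u, h⟩ then 1 else 0) else 0) := by
  rw [vB, ← Fin.sum_univ_eq_sum_range
    (fun u => if h : u < D then (2:ℤ)^u * (if y ⟨u, h⟩ then 1 else 0) else 0) D]
  apply Finset.sum_congr rfl
  intro k _
  simp [k.isLt]


lemma dotInt_range {N : ℕ} (A : ℕ → ℤ) (Z : ℕ → Bool) :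
    dotInt (fun u : Fin N => A u.val) (fun u : Fin N => Z u.val)
      = ∑ u ∈ Finset.range N, A u * (if Z u then 1 else 0) := by
  show (∑ u : Fin N, A u.val * (if Z u.val then 1 else 0)) = _
  exact Fin.sum_univ_eq_sum_range (fun u => A u * (if Z u then 1 else 0)) N

end S16


/-- a five-layer BTN perfect autoencoder with layer sizes
`D`, `r+D`, `2r`, `rD`, `D`, where `r = ⌈√n⌉`. -/
theorem stmt_16 (D n r : ℕ) (hr : r = ⌈Real.sqrt n⌉₊)
    (x : Fin n → Fin D → Bool) (hx : Function.Injective x) :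
    ∃ (F₁ : (Fin D → Bool) → (Fin (r + D) → Bool))
      (F₂ : (Fin (r + D) → Bool) → (Fin (2 * r) → Bool))
      (F₃ : (Fin (2 * r) → Bool) → (Fin (r * D) → Bool))
      (F₄ : (Fin (r * D) → Bool) → (Fin D → Bool)),
      IsThresholdLayer F₁ ∧ IsThresholdLayer F₂ ∧ IsThresholdLayer F₃ ∧
      IsThresholdLayer F₄ ∧ ∀ i, F₄ (F₃ (F₂ (F₁ (x i)))) = x i := by
  classical
  set v : Fin n → ℤ := fun i => S16.vB D (x i) with hv
  have hvinj : Function.Injective v := fun i j h => hx (S16.vB_inj D h)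
  have hvlt : ∀ i, v i < 2^D := fun i => S16.vB_lt D (x i)
  set ρ : Fin n → ℕ := S16.rkv v with hρ
  set w : ℕ → ℤ := S16.wv v (2^D) with hw
  have hkey : ∀ (i : Fin n) (m : ℕ), w m ≤ v i ↔ m ≤ ρ i :=
    fun i m => S16.wv_le_iff hvinj hvlt i m
  have hnr : n ≤ r * r := by
    have h1 : Real.sqrt n ≤ (r:ℝ) := by
      rw [hr]; exact_mod_cast Nat.le_ceil (Real.sqrt n)
    have h2 : (n:ℝ) ≤ (r:ℝ) * (r:ℝ) := by
      have h3 := Real.mul_self_sqrt (show (0:ℝ) ≤ (n:ℝ) by positivity)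
      nlinarith [Real.sqrt_nonneg (n:ℝ)]
    exact_mod_cast h2
  set pt : ℕ → ℕ → Bool := fun m k =>
    if h : ∃ j, ρ j = m then (if hk : k < D then x h.choose ⟨k, hk⟩ else false)
    else false with hptd
  have hpt : ∀ (i : Fin n) (k : ℕ) (hk : k < D), pt (ρ i) k = x i ⟨k, hk⟩ := by
    intro i k hk
    have h : ∃ j, ρ j = ρ i := ⟨i, rfl⟩
    have hch : h.choose = i := S16.rkv_inj hvinj h.choose_spec
    rw [hptd]
    dsimp only
    rw [dif_pos h, dif_pos hk, hch]
  set A₁ : ℕ → ℕ → ℤ := fun j k =>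
    if j < r then 2^k else (if k = j - r then 1 else 0) with hA₁
  set Θ₁ : ℕ → ℤ := fun j => if j < r then w (j*r) else 1 with hΘ₁
  set A₂ : ℕ → ℕ → ℤ := fun j u =>
    if j < r then (if u = j then 1 else 0)
    else (if u < r then -(w (u*r + (j-r)) - if u = 0 then 0 else w ((u-1)*r + (j-r)))
          else 2^(u-r)) with hA₂
  set Θ₂ : ℕ → ℤ := fun j => if j < r then 1 else 0 with hΘ₂
  set A₃ : ℕ → ℕ → ℤ := fun m u =>
    if u < r then ((if u = m / D then 2 else 0) + (if u = m / D + 1 then -2 else 0))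
    else ((if pt ((m / D) * r + (u - r)) (m % D) then 1 else 0) -
          (if u - r = 0 then 0
           else (if pt ((m / D) * r + (u - r) - 1) (m % D) then 1 else 0))) with hA₃
  set A₄ : ℕ → ℕ → ℤ := fun k m => if m % D = k then 1 else 0 with hA₄
  set F₁ : (Fin D → Bool) → (Fin (r + D) → Bool) :=
    fun z j => decide (Θ₁ j.val ≤ dotInt (fun k : Fin D => A₁ j.val k.val) z) with hF₁
  set F₂ : (Fin (r + D) → Bool) → (Fin (2 * r) → Bool) :=
    fun z j => decide (Θ₂ j.val ≤ dotInt (fun u : Fin (r+D) => A₂ j.val u.val) z) with hF₂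
  set F₃ : (Fin (2 * r) → Bool) → (Fin (r * D) → Bool) :=
    fun z m => decide ((3:ℤ) ≤ dotInt (fun u : Fin (2*r) => A₃ m.val u.val) z) with hF₃
  set F₄ : (Fin (r * D) → Bool) → (Fin D → Bool) :=
    fun z k => decide ((1:ℤ) ≤ dotInt (fun m : Fin (r*D) => A₄ k.val m.val) z) with hF₄
  refine ⟨F₁, F₂, F₃, F₄, ?_, ?_, ?_, ?_, ?_⟩
  · exact fun j => ⟨fun k => A₁ j.val k.val, Θ₁ j.val, fun z => by rw [hF₁]; rfl⟩
  · exact fun j => ⟨fun u => A₂ j.val u.val, Θ₂ j.val, fun z => by rw [hF₂]; rfl⟩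
  · exact fun m => ⟨fun u => A₃ m.val u.val, 3, fun z => by rw [hF₃]; rfl⟩
  · exact fun k => ⟨fun m => A₄ k.val m.val, 1, fun z => by rw [hF₄]; rfl⟩
  intro i
  have hnpos : 0 < n := i.pos
  have hrpos : 0 < r := by
    rcases Nat.eq_zero_or_pos r with h0 | h
    · rw [h0] at hnr; simp at hnr; omega
    · exact h
  have hρn : ρ i < n := S16.rkv_lt v i
  set q := ρ i / r with hq
  set s := ρ i % r with hs
  have hρqs : ρ i = q * r + s := by rw [hq, hs, mul_comm]; exact (Nat.div_add_mod _ _).symm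
  have hsr : s < r := Nat.mod_lt _ hrpos
  have hqr : q < r := by rw [hq]; exact Nat.div_lt_of_lt_mul (lt_of_lt_of_le hρn hnr)
  have hjq : ∀ jj : ℕ, jj ≤ q ↔ jj * r ≤ ρ i := fun jj => Nat.le_div_iff_mul_le hrpos
  set Z1 : ℕ → Bool := fun u => if u < r then decide (u ≤ q) else pt (ρ i) (u - r) with hZ1
  set Z2 : ℕ → Bool := fun u => if u < r then decide (u ≤ q) else decide (u - r ≤ s) with hZ2
  set Z3 : ℕ → Bool := fun m => decide (m / D = q) && pt (ρ i) (m % D) with hZ3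
  have E1 : F₁ (x i) = (fun j : Fin (r+D) => Z1 j.val) := by
    rw [hF₁]
    funext j
    dsimp only
    by_cases hj : (j:ℕ) < r
    · have hdot : dotInt (fun k : Fin D => A₁ j.val k.val) (x i) = v i := by
        rw [hA₁]
        simp only [if_pos hj]
        rw [hv]
        rfl
      rw [hdot, hΘ₁, hZ1]
      dsimp only
      simp only [if_pos hj]
      apply decide_eq_decide.mpr
      rw [hkey i]
      exact (hjq _).symm
    · have hjD : (j:ℕ) - r < D := by have := j.isLt; omega
      have hdot : dotInt (fun k : Fin D => A₁ j.val k.val) (x i)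
          = (if x i ⟨(j:ℕ) - r, hjD⟩ then 1 else 0) := by
        rw [hA₁]
        simp only [if_neg hj]
        exact S16.dot_single _ hjD (x i)
      rw [hdot, hΘ₁, hZ1]
      dsimp only
      simp only [if_neg hj]
      rw [hpt i _ hjD]
      exact S16.decide_one_le_ite _
  have E2 : F₂ (fun j : Fin (r+D) => Z1 j.val) = (fun u : Fin (2*r) => Z2 u.val) := by
    rw [hF₂]
    funext j
    dsimp only
    by_cases hj : (j:ℕ) < r
    · have hjN : (j:ℕ) < r + D := by omega
      have hdot : dotInt (fun u : Fin (r+D) => A₂ j.val u.val) (fun u : Fin (r+D) => Z1 u.val)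
          = (if Z1 (j:ℕ) then 1 else 0) := by
        rw [hA₂]
        simp only [if_pos hj]
        exact S16.dot_single _ hjN _
      rw [hdot, hΘ₂, hZ2, hZ1]
      dsimp only
      simp only [if_pos hj]
      exact S16.decide_one_le_ite _
    · have htr : (j:ℕ) - r < r := by have := j.isLt; omega
      rw [S16.dotInt_range (A₂ j.val) Z1]
      have hsum : ∑ u ∈ Finset.range (r + D), A₂ (j:ℕ) u * (if Z1 u then 1 else 0)
          = -(w (q * r + ((j:ℕ) - r))) + v i := by
        rw [S16.sum_split]
        congr 1
        · have hcg : ∀ u ∈ Finset.range r, A₂ (j:ℕ) u * (if Z1 u then 1 else 0)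
              = (if u ≤ q then
                  (fun a => -(w (a*r + ((j:ℕ)-r)) - if a = 0 then 0
                    else w ((a-1)*r + ((j:ℕ)-r)))) u else 0) := by
            intro u hu
            rw [Finset.mem_range] at hu
            rw [hA₂, hZ1]
            dsimp only
            simp only [if_neg hj, if_pos hu]
            by_cases hq' : u ≤ q
            · simp [hq']
            · simp [hq']
          rw [Finset.sum_congr rfl hcg, S16.trunc hqr, Finset.sum_neg_distrib,
            S16.tele (fun a => w (a*r + ((j:ℕ)-r))) q]
        · have hcg : ∀ u ∈ Finset.range D, A₂ (j:ℕ) (r + u) * (if Z1 (r+u) then 1 else 0)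
              = (if h : u < D then (2:ℤ)^u * (if x i ⟨u, h⟩ then 1 else 0) else 0) := by
            intro u hu
            rw [Finset.mem_range] at hu
            rw [hA₂, hZ1]
            dsimp only
            simp only [if_neg hj, if_neg (by omega : ¬ r + u < r)]
            have hru : r + u - r = u := by omega
            simp only [hru, dif_pos hu, hpt i u hu]
          rw [Finset.sum_congr rfl hcg, ← S16.vB_range, hv]
      rw [hsum, hΘ₂, hZ2]
      dsimp only
      simp only [if_neg hj]
      apply decide_eq_decide.mpr
      have h1 : ((0:ℤ) ≤ -(w (q * r + ((j:ℕ) - r))) + v i) ↔ w (q * r + ((j:ℕ) - r)) ≤ v i := by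
        omega
      rw [h1, hkey i, hρqs]
      omega
  have E3 : F₃ (fun u : Fin (2*r) => Z2 u.val) = (fun m : Fin (r*D) => Z3 m.val) := by
    rw [hF₃]
    funext m
    dsimp only
    have hDpos : 0 < D := by
      rcases Nat.eq_zero_or_pos D with h0 | h
      · exfalso
        have hm := m.isLt
        have h1 : r * D = 0 := by rw [h0, Nat.mul_zero]
        omega
      · exact h
    have hkD : (m:ℕ) % D < D := Nat.mod_lt _ hDpos
    have htr : (m:ℕ) / D < r := by
      apply Nat.div_lt_of_lt_mul
      have hmm := m.isLt
      have h1 : r * D = D * r := Nat.mul_comm r D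
      omega
    rw [S16.dotInt_range (A₃ m.val) Z2]
    have hsum : ∑ u ∈ Finset.range (2 * r), A₃ (m:ℕ) u * (if Z2 u then 1 else 0)
        = 2 * (if (m:ℕ)/D ≤ q then 1 else 0)
          + (if (m:ℕ)/D + 1 ∈ Finset.range r then (-2) * (if (m:ℕ)/D + 1 ≤ q then 1 else 0) else 0)
          + (if pt (((m:ℕ)/D) * r + s) ((m:ℕ) % D) then 1 else 0) := by
      rw [show 2 * r = r + r by ring, S16.sum_split]
      congr 1
      · have hcg : ∀ u ∈ Finset.range r, A₃ (m:ℕ) u * (if Z2 u then 1 else 0)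
            = (if u = (m:ℕ)/D then (2:ℤ) * (if u ≤ q then 1 else 0) else 0)
              + (if u = (m:ℕ)/D + 1 then (-2:ℤ) * (if u ≤ q then 1 else 0) else 0) := by
          intro u hu
          rw [Finset.mem_range] at hu
          rw [hA₃, hZ2]
          dsimp only
          simp only [if_pos hu]
          by_cases hq' : u ≤ q <;> by_cases h1 : u = (m:ℕ)/D <;>
            by_cases h2 : u = (m:ℕ)/D + 1 <;> simp [hq', h1, h2] <;> ring
        rw [Finset.sum_congr rfl hcg, Finset.sum_add_distrib,
          Finset.sum_ite_eq' (Finset.range r) ((m:ℕ)/D) (fun u => (2:ℤ) * (if u ≤ q then 1 else 0)),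
          Finset.sum_ite_eq' (Finset.range r) ((m:ℕ)/D + 1)
            (fun u => (-2:ℤ) * (if u ≤ q then 1 else 0)),
          if_pos (Finset.mem_range.mpr htr)]
      · have hcg : ∀ u ∈ Finset.range r, A₃ (m:ℕ) (r + u) * (if Z2 (r+u) then 1 else 0)
            = (if u ≤ s then
                (fun a => if pt (((m:ℕ)/D) * r + a) ((m:ℕ) % D) then (1:ℤ) else 0) u
                - (if u = 0 then 0 else
                  (fun a => if pt (((m:ℕ)/D) * r + a) ((m:ℕ) % D) then (1:ℤ) else 0) (u-1))
              else 0) := by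
          intro u hu
          rw [Finset.mem_range] at hu
          rw [hA₃, hZ2]
          dsimp only
          simp only [if_neg (by omega : ¬ r + u < r)]
          have hru : r + u - r = u := by omega
          rw [hru]
          by_cases h0 : u = 0
          · subst h0
            by_cases hs' : 0 ≤ s
            · simp [hs']
            · omega
          · have hidx : ((m:ℕ)/D) * r + u - 1 = ((m:ℕ)/D) * r + (u - 1) := by omega
            rw [if_neg h0, hidx]
            by_cases hs' : u ≤ s
            · simp [hs', h0]
            · simp [hs', h0]
        rw [Finset.sum_congr rfl hcg]
        have := S16.trunc hsr (fun a =>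
          (if pt (((m:ℕ)/D) * r + a) ((m:ℕ) % D) then (1:ℤ) else 0)
          - (if a = 0 then 0 else (if pt (((m:ℕ)/D) * r + (a-1)) ((m:ℕ) % D) then (1:ℤ) else 0)))
        rw [this, S16.tele (fun a => if pt (((m:ℕ)/D) * r + a) ((m:ℕ) % D) then (1:ℤ) else 0) s]
    rw [hsum, hZ3]
    dsimp only
    by_cases hq' : (m:ℕ)/D = q
    · have hqs : q * r + s = ρ i := hρqs.symm
      rw [hq', hqs, if_pos le_rfl, if_neg (by omega : ¬ q + 1 ≤ q)]
      have hmem : (if q + 1 ∈ Finset.range r then (-2:ℤ) * 0 else 0) = 0 := by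
        split <;> ring
      rw [hmem]
      cases hb : pt (ρ i) ((m:ℕ) % D) <;> simp [hq', hb] <;> norm_num
    · have hrhs : (decide ((m:ℕ)/D = q) && pt (ρ i) ((m:ℕ) % D)) = false := by
        simp [hq']
      rw [hrhs]
      apply decide_eq_false
      rcases Nat.lt_or_ge ((m:ℕ)/D) q with hlt | hge
      · rw [if_pos (by omega : (m:ℕ)/D ≤ q),
          if_pos (Finset.mem_range.mpr (by omega : (m:ℕ)/D + 1 < r)),
          if_pos (by omega : (m:ℕ)/D + 1 ≤ q)]
        split <;> omega
      · have hgt : q < (m:ℕ)/D := by omega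
        rw [if_neg (by omega : ¬ (m:ℕ)/D ≤ q)]
        have hmem : (if (m:ℕ)/D + 1 ∈ Finset.range r then
            (-2:ℤ) * (if (m:ℕ)/D + 1 ≤ q then 1 else 0) else 0) = 0 := by
          split
          · rw [if_neg (by omega : ¬ (m:ℕ)/D + 1 ≤ q)]; ring
          · rfl
        rw [hmem]
        split <;> omega
  have E4 : F₄ (fun m : Fin (r*D) => Z3 m.val) = x i := by
    rw [hF₄]
    funext k
    dsimp only
    rw [S16.dotInt_range (A₄ k.val) Z3]
    have hDpos : 0 < D := k.pos
    have hm0 : q * D + (k:ℕ) < r * D := by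
      have h1 : q * D + (k:ℕ) < (q + 1) * D := by
        have := k.isLt
        calc q * D + (k:ℕ) < q * D + D := by omega
        _ = (q+1) * D := by ring
      have h2 : (q + 1) * D ≤ r * D := Nat.mul_le_mul_right D hqr
      omega
    have hsum : ∑ m' ∈ Finset.range (r*D), A₄ (k:ℕ) m' * (if Z3 m' then 1 else 0)
        = (if x i k then 1 else 0) := by
      rw [Finset.sum_eq_single (q * D + (k:ℕ))]
      · rw [hA₄, hZ3]
        dsimp only
        have h1 : (q * D + (k:ℕ)) % D = (k:ℕ) := Nat.mul_add_mod_of_lt k.isLt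
        have h2 : (q * D + (k:ℕ)) / D = q := by
          rw [mul_comm, Nat.mul_add_div hDpos, Nat.div_eq_of_lt k.isLt, Nat.add_zero]
        beta_reduce
        rw [h1, h2, if_pos rfl, hpt i _ k.isLt]
        simp
      · intro m' hm' hne
        rw [hA₄, hZ3]
        dsimp only
        by_cases h1 : m' % D = (k:ℕ)
        · rw [if_pos h1]
          by_cases h2 : m' / D = q
          · exfalso
            apply hne
            have h3 := Nat.div_add_mod m' D
            rw [h2] at h3
            have h4 : D * q = q * D := Nat.mul_comm D q
            omega
          · simp [h2]
        · rw [if_neg h1]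
          ring
      · intro hnm
        exact absurd (Finset.mem_range.mpr hm0) hnm
    rw [hsum]
    have : (if x i k then (1:ℤ) else 0) = (if x i ⟨(k:ℕ), k.isLt⟩ then 1 else 0) := by simp
    exact S16.decide_one_le_ite _
  rw [E1, E2, E3]
  exact E4
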